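/- arXiv:2302.11045 — 4 statements merged into one kernel-verified Lean document; each statement's English description precedes it below -/
import Mathlib

section
/- For σ = Re(s) > 1 and any positive integers q, d with d | q, the Dirichlet series ∑_{n ≥ 1, gcd(n,q) = d} d_2(n)/n^s equals (ζ(s)²/d^s) · ∑ over triples (r,h,H) with r·h | q, r | d, H | q/d of μ(h)·μ(H)/(h·H)^s. -/
open scoped BigOperators

/-- The `k`-fold divisor function, as the `k`-th Dirichlet-convolution power of `ζ`. -/
def dk (k : ℕ) : ArithmeticFunction ℕ := (ArithmeticFunction.zeta) ^ k


lemma natCast_mul_cpow (a b : ℕ) (s : ℂ) :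
    (((a * b : ℕ)) : ℂ) ^ s = (a : ℂ) ^ s * (b : ℂ) ^ s := by
  push_cast
  exact Complex.natCast_mul_natCast_cpow a b s

lemma summable_ite_cpow (s : ℂ) (hs : 1 < s.re) (p : ℕ → Prop) [DecidablePred p] :
    Summable (fun n : ℕ => if p n then ((n : ℂ) ^ s)⁻¹ else 0) := by
  have hbase : Summable (fun n : ℕ => ((n : ℂ) ^ s)⁻¹) := by
    simpa [one_div] using Complex.summable_one_div_nat_cpow.mpr hs
  refine (hbase.indicator {n | p n}).congr fun n => ?_
  by_cases h : p n <;> simp [Set.indicator_apply, h]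

lemma summable_norm_ite_cpow (s : ℂ) (hs : 1 < s.re) (p : ℕ → Prop) [DecidablePred p] :
    Summable (fun n : ℕ => ‖if p n then ((n : ℂ) ^ s)⁻¹ else 0‖) := by
  have hbase : Summable (fun n : ℕ => ‖((n : ℂ) ^ s)⁻¹‖) := by
    have h1 : Summable (fun n : ℕ => 1 / (n : ℝ) ^ (s.re)) :=
      Real.summable_one_div_nat_rpow.mpr hs
    refine h1.congr fun n => ?_
    rcases Nat.eq_zero_or_pos n with rfl | hn
    · have : s ≠ 0 := fun h => by simp [h] at hs; linarith
      simp [Complex.zero_cpow this, Real.zero_rpow (by positivity : s.re ≠ 0)]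
    · rw [norm_inv, Complex.norm_natCast_cpow_of_pos hn, one_div]
  refine hbase.of_nonneg_of_le (fun n => norm_nonneg _) fun n => ?_
  by_cases h : p n <;> simp [h]

lemma sum_divisors_moebius_eq (n : ℕ) :
    (∑ h ∈ n.divisors, (ArithmeticFunction.moebius h : ℤ)) = if n = 1 then 1 else 0 := by
  rw [← ArithmeticFunction.coe_mul_zeta_apply, ArithmeticFunction.moebius_mul_coe_zeta,
    ArithmeticFunction.one_apply]

lemma tsum_ite_dvd_eq (s : ℂ) (h : ℕ) (hh : h ≠ 0) (c : ℂ) :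
    (∑' n : ℕ, if h ∣ n then c * ((n : ℂ) ^ s)⁻¹ else 0)
      = ∑' m : ℕ, c * (((h * m : ℕ) : ℂ) ^ s)⁻¹ := by
  have hinj : Function.Injective (fun m : ℕ => h * m) := fun a b hab =>
    Nat.eq_of_mul_eq_mul_left (Nat.pos_of_ne_zero hh) hab
  have hsupp : Function.support (fun n : ℕ => if h ∣ n then c * ((n : ℂ) ^ s)⁻¹ else 0)
      ⊆ Set.range (fun m : ℕ => h * m) := by
    intro n hn
    have hdvd : h ∣ n := by
      by_contra hcon
      simp [hcon] at hn
    exact ⟨n / h, (Nat.mul_div_cancel' hdvd)⟩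
  have := hinj.tsum_eq hsupp
  rw [← this]
  refine tsum_congr fun m => ?_
  simp [Nat.dvd_mul_right]

lemma coprime_tsum (s : ℂ) (hs : 1 < s.re) (N : ℕ) (hN : N ≠ 0) :
    (∑' u : ℕ, if Nat.gcd u N = 1 then ((u : ℂ) ^ s)⁻¹ else 0)
      = riemannZeta s *
        ∑ h ∈ N.divisors, ((ArithmeticFunction.moebius h : ℤ) : ℂ) / (h : ℂ) ^ s := by
  have hs0 : s ≠ 0 := fun h => by rw [h] at hs; simp at hs; linarith
  rw [Finset.mul_sum]
  have hterm : ∀ h ∈ N.divisors,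
      riemannZeta s * (((ArithmeticFunction.moebius h : ℤ) : ℂ) / (h : ℂ) ^ s)
        = ∑' n : ℕ, (if h ∣ n then ((ArithmeticFunction.moebius h : ℤ) : ℂ) * ((n : ℂ) ^ s)⁻¹
            else 0) := by
    intro h hmem
    have hh : h ≠ 0 := fun h0 => by
      rcases Nat.mem_divisors.mp hmem with ⟨hdvd, hN'⟩
      exact hN' (Nat.eq_zero_of_zero_dvd (h0 ▸ hdvd))
    set c : ℂ := ((ArithmeticFunction.moebius h : ℤ) : ℂ)
    rw [tsum_ite_dvd_eq s h hh c, zeta_eq_tsum_one_div_nat_cpow hs, mul_comm, ← tsum_mul_left]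
    refine tsum_congr fun m => ?_
    rw [natCast_mul_cpow, mul_inv, div_mul_div_comm, mul_one, div_eq_mul_inv, mul_inv,
      mul_comm ((h:ℂ)^s)⁻¹]
  rw [Finset.sum_congr rfl hterm, ← Summable.tsum_finsetSum ?hsum]
  case hsum =>
    intro h hmem
    have := (summable_ite_cpow s hs (fun n => h ∣ n)).mul_left
      ((ArithmeticFunction.moebius h : ℤ) : ℂ)
    refine this.congr fun n => ?_
    simp [mul_ite]
  refine tsum_congr fun n => ?_
  rcases Nat.eq_zero_or_pos n with rfl | hn
  · simp [Complex.zero_cpow hs0]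
  · rw [eq_comm]
    have hfilter : N.divisors.filter (· ∣ n) = (Nat.gcd n N).divisors := by
      ext x
      simp only [Finset.mem_filter, Nat.mem_divisors]
      constructor
      · rintro ⟨⟨h1, h2⟩, h3⟩
        exact ⟨Nat.dvd_gcd h3 h1, fun hg => by simp [Nat.gcd_eq_zero_iff] at hg; omega⟩
      · rintro ⟨h1, h2⟩
        exact ⟨⟨h1.trans (Nat.gcd_dvd_right n N), hN⟩, h1.trans (Nat.gcd_dvd_left n N)⟩
    calc (∑ h ∈ N.divisors, if h ∣ n then ((ArithmeticFunction.moebius h : ℤ) : ℂ) * ((n : ℂ) ^ s)⁻¹ else 0)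
        = ∑ h ∈ N.divisors.filter (· ∣ n), ((ArithmeticFunction.moebius h : ℤ) : ℂ) * ((n : ℂ) ^ s)⁻¹ :=
          (Finset.sum_filter _ _).symm
      _ = (((∑ h ∈ (Nat.gcd n N).divisors, (ArithmeticFunction.moebius h : ℤ)) : ℤ) : ℂ) * ((n : ℂ) ^ s)⁻¹ := by
          rw [hfilter]; push_cast [Finset.sum_mul]; ring_nf
          exact Finset.sum_congr rfl fun _ _ => mul_comm _ _
      _ = (if Nat.gcd n N = 1 then ((n : ℂ) ^ s)⁻¹ else 0) := by
          rw [sum_divisors_moebius_eq]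
          split_ifs <;> simp

lemma tsum_divisorsAntidiagonal {F : ℕ × ℕ → ℂ} (hF : Summable F)
    (h0 : ∀ p : ℕ × ℕ, p.1 * p.2 = 0 → F p = 0) :
    ∑' n : ℕ, ∑ p ∈ n.divisorsAntidiagonal, F p = ∑' p : ℕ × ℕ, F p := by
  have hfib := hF.hasSum.tsum_fiberwise (fun p => p.1 * p.2)
  rw [← hfib.tsum_eq]
  refine tsum_congr fun n => ?_
  rcases Nat.eq_zero_or_pos n with rfl | hn
  · rw [Nat.divisorsAntidiagonal_zero, Finset.sum_empty]
    have hz : ∀ b : ((fun p : ℕ × ℕ => p.1 * p.2) ⁻¹' {0} : Set (ℕ × ℕ)), F ↑b = 0 := by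
      rintro ⟨p, hp⟩
      exact h0 p (by simpa using hp)
    rw [tsum_congr hz, tsum_zero]
  · rw [show (fun p : ℕ × ℕ => p.1 * p.2) ⁻¹' {n} = ↑n.divisorsAntidiagonal by
        ext p; simp [Nat.mem_divisorsAntidiagonal, hn.ne'],
      Finset.tsum_subtype' n.divisorsAntidiagonal F]

lemma gcd_mul_eq_of_dvd {r q : ℕ} (u : ℕ) (hr : r ∣ q) :
    Nat.gcd (r * u) q = r * Nat.gcd u (q / r) := by
  conv_lhs => rw [← Nat.mul_div_cancel' hr]
  exact Nat.gcd_mul_left r u (q / r)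

lemma div_mul_div_of_dvd {r d q : ℕ} (hrd : r ∣ d) (hdq : d ∣ q) (hr : r ≠ 0) (hd : d ≠ 0) :
    q / r = (d / r) * (q / d) := by
  obtain ⟨e, rfl⟩ := hrd
  obtain ⟨f, rfl⟩ := hdq
  rw [Nat.mul_div_cancel_left e (Nat.pos_of_ne_zero hr),
    Nat.mul_div_cancel_left f (Nat.pos_of_ne_zero hd),
    mul_assoc, Nat.mul_div_cancel_left _ (Nat.pos_of_ne_zero hr)]

lemma pair_tsum_eq_sigma (s : ℂ) (hs : 1 < s.re) (q d : ℕ) (hq : 0 < q) (hd0 : 0 < d)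
    (hd : d ∣ q) :
    (∑' p : ℕ × ℕ,
        if Nat.gcd (p.1 * p.2) q = d then ((p.1 : ℂ) ^ s)⁻¹ * ((p.2 : ℂ) ^ s)⁻¹ else 0)
      = ∑' x : (Σ _ : {r // r ∈ d.divisors}, ℕ × ℕ),
          if Nat.gcd x.2.1 (q / (x.1 : ℕ)) = 1 ∧ Nat.gcd x.2.2 (q / d) = 1 then
            (((x.1 : ℕ) : ℂ) ^ s)⁻¹ * ((x.2.1 : ℂ) ^ s)⁻¹ *
              (((d / (x.1 : ℕ) : ℕ) : ℂ) ^ s)⁻¹ * ((x.2.2 : ℂ) ^ s)⁻¹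
          else 0 := by
  classical
  have hs0 : s ≠ 0 := fun h => by rw [h] at hs; simp at hs; linarith
  set f : ℕ × ℕ → ℂ := fun p =>
    if Nat.gcd (p.1 * p.2) q = d then ((p.1 : ℂ) ^ s)⁻¹ * ((p.2 : ℂ) ^ s)⁻¹ else 0 with hf_def
  set g : (Σ _ : {r // r ∈ d.divisors}, ℕ × ℕ) → ℂ := fun x =>
    if Nat.gcd x.2.1 (q / (x.1 : ℕ)) = 1 ∧ Nat.gcd x.2.2 (q / d) = 1 then
      (((x.1 : ℕ) : ℂ) ^ s)⁻¹ * ((x.2.1 : ℂ) ^ s)⁻¹ *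
        (((d / (x.1 : ℕ) : ℕ) : ℂ) ^ s)⁻¹ * ((x.2.2 : ℂ) ^ s)⁻¹
    else 0 with hg_def
  have cpow0 : ((0 : ℕ) : ℂ) ^ s = 0 := by rw [Nat.cast_zero, Complex.zero_cpow hs0]
  -- facts about elements of the support of g
  have hsupp_g : ∀ x : (Σ _ : {r // r ∈ d.divisors}, ℕ × ℕ), g x ≠ 0 →
      (Nat.gcd x.2.1 (q / (x.1 : ℕ)) = 1 ∧ Nat.gcd x.2.2 (q / d) = 1) ∧
        x.2.1 ≠ 0 ∧ x.2.2 ≠ 0 := by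
    rintro ⟨⟨r, hr⟩, u, v⟩ hx
    rw [hg_def] at hx
    simp only at hx
    split_ifs at hx with hcond
    · refine ⟨hcond, ?_, ?_⟩
      · rintro rfl; simp [Complex.cpow_eq_zero_iff, hs0] at hx
      · rintro rfl; simp [Complex.cpow_eq_zero_iff, hs0] at hx
    · exact absurd rfl hx
  have hmemdiv : ∀ r : ℕ, r ∈ d.divisors → r ∣ q ∧ r ≠ 0 ∧ r ∣ d := by
    intro r hr
    rcases Nat.mem_divisors.mp hr with ⟨hrd, -⟩
    exact ⟨hrd.trans hd, fun h0 => hd0.ne' (Nat.eq_zero_of_zero_dvd (h0 ▸ hrd)), hrd⟩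
  set i : (Function.support g) → ℕ × ℕ :=
    fun x => ((x.1.1 : ℕ) * x.1.2.1, (d / (x.1.1 : ℕ)) * x.1.2.2) with hi_def
  refine tsum_eq_tsum_of_ne_zero_bij i ?_ ?_ ?_
  · -- injectivity
    rintro ⟨⟨⟨r, hr⟩, u, v⟩, hx⟩ ⟨⟨⟨r', hr'⟩, u', v'⟩, hy⟩ hxy
    obtain ⟨⟨hu1, hv1⟩, hu0, hv0⟩ := hsupp_g _ hx
    obtain ⟨⟨hu1', hv1'⟩, hu0', hv0'⟩ := hsupp_g _ hy
    obtain ⟨hrq, hr0, hrd⟩ := hmemdiv r hr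
    obtain ⟨hrq', hr0', hrd'⟩ := hmemdiv r' hr'
    simp only [hi_def, Prod.mk.injEq] at hxy
    obtain ⟨h1, h2⟩ := hxy
    simp only at h1 h2 hu1 hv1 hu1' hv1'
    have hgcd1 : Nat.gcd (r * u) q = r := by
      rw [gcd_mul_eq_of_dvd u hrq, hu1, mul_one]
    have hgcd2 : Nat.gcd (r' * u') q = r' := by
      rw [gcd_mul_eq_of_dvd u' hrq', hu1', mul_one]
    have hrr : r = r' := by rw [← hgcd1, ← hgcd2, h1]
    subst hrr
    have huu : u = u' := Nat.eq_of_mul_eq_mul_left (Nat.pos_of_ne_zero hr0) h1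
    have hdr0 : 0 < d / r := Nat.div_pos (Nat.le_of_dvd hd0 hrd) (Nat.pos_of_ne_zero hr0)
    have hvv : v = v' := Nat.eq_of_mul_eq_mul_left hdr0 h2
    subst huu; subst hvv
    rfl
  · -- support f ⊆ range i
    rintro ⟨a, b⟩ hp
    have hp' : (if Nat.gcd (a * b) q = d then ((a : ℂ) ^ s)⁻¹ * ((b : ℂ) ^ s)⁻¹ else 0) ≠ 0 := hp
    clear hp
    have hcond : Nat.gcd (a * b) q = d := by
      by_contra hcon; simp [hcon] at hp'
    have ha : a ≠ 0 := by rintro rfl; simp [Complex.cpow_eq_zero_iff, hs0] at hp'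
    have hb : b ≠ 0 := by rintro rfl; simp [Complex.cpow_eq_zero_iff, hs0] at hp'
    set r := Nat.gcd a q with hr_def
    have hra : r ∣ a := Nat.gcd_dvd_left a q
    have hrq : r ∣ q := Nat.gcd_dvd_right a q
    have hrd : r ∣ d := by
      rw [← hcond]
      exact Nat.dvd_gcd (hra.trans (dvd_mul_right a b)) hrq
    have hr0 : r ≠ 0 := fun h0 => ha (by
      have := Nat.gcd_eq_zero_iff.mp (hr_def ▸ h0); exact this.1)
    have hrpos : 0 < r := Nat.pos_of_ne_zero hr0
    set u := a / r with hu_def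
    have hu : a = r * u := (Nat.mul_div_cancel' hra).symm
    have hu0 : u ≠ 0 := fun h0 => ha (by rw [hu, h0, mul_zero])
    have hu1 : Nat.gcd u (q / r) = 1 := by
      have : r * Nat.gcd u (q / r) = r * 1 := by
        rw [mul_one, ← gcd_mul_eq_of_dvd u hrq, ← hu]
      exact Nat.eq_of_mul_eq_mul_left hrpos this
    have hbq : r * Nat.gcd b (q / r) = d := by
      rw [← (Nat.Coprime.gcd_mul_left_cancel b hu1), ← gcd_mul_eq_of_dvd (u * b) hrq,
        ← mul_assoc, ← hu, hcond]
    have hdr : Nat.gcd b (q / r) = d / r := by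
      rw [← hbq, Nat.mul_div_cancel_left _ hrpos]
    have hdrb : (d / r) ∣ b := hdr ▸ Nat.gcd_dvd_left b (q / r)
    have hdr0 : 0 < d / r := Nat.div_pos (Nat.le_of_dvd hd0 hrd) hrpos
    set v := b / (d / r) with hv_def
    have hv : b = (d / r) * v := (Nat.mul_div_cancel' hdrb).symm
    have hv0 : v ≠ 0 := fun h0 => hb (by rw [hv, h0, mul_zero])
    have hsplit : q / r = (d / r) * (q / d) := div_mul_div_of_dvd hrd hd hr0 hd0.ne'
    have hv1 : Nat.gcd v (q / d) = 1 := by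
      have h1 : (d / r) * Nat.gcd v (q / d) = (d / r) * 1 := by
        rw [mul_one, ← Nat.gcd_mul_left, ← hv, ← hsplit, hdr]
      exact Nat.eq_of_mul_eq_mul_left hdr0 h1
    have hmem : r ∈ d.divisors := Nat.mem_divisors.mpr ⟨hrd, hd0.ne'⟩
    have hgne : g ⟨⟨r, hmem⟩, (u, v)⟩ ≠ 0 := by
      rw [hg_def]
      simp only
      rw [if_pos ⟨hu1, hv1⟩]
      have h1 : ((r : ℕ) : ℂ) ^ s ≠ 0 := by
        simp [Complex.cpow_eq_zero_iff, hr0]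
      have h2 : ((u : ℕ) : ℂ) ^ s ≠ 0 := by simp [Complex.cpow_eq_zero_iff, hu0]
      have h3 : (((d / r : ℕ)) : ℂ) ^ s ≠ 0 := by
        simp [Complex.cpow_eq_zero_iff, hdr0.ne']
      have h4 : ((v : ℕ) : ℂ) ^ s ≠ 0 := by simp [Complex.cpow_eq_zero_iff, hv0]
      exact mul_ne_zero (mul_ne_zero (mul_ne_zero (inv_ne_zero h1) (inv_ne_zero h2))
        (inv_ne_zero h3)) (inv_ne_zero h4)
    refine ⟨⟨⟨⟨r, hmem⟩, (u, v)⟩, hgne⟩, ?_⟩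
    rw [hi_def]
    simp only
    rw [Prod.mk.injEq]
    exact ⟨hu.symm, hv.symm⟩
  · -- values agree
    rintro ⟨⟨⟨r, hr⟩, u, v⟩, hx⟩
    obtain ⟨⟨hu1, hv1⟩, hu0, hv0⟩ := hsupp_g _ hx
    obtain ⟨hrq, hr0, hrd⟩ := hmemdiv r hr
    simp only at hu1 hv1
    have hdr0 : 0 < d / r := Nat.div_pos (Nat.le_of_dvd hd0 hrd) (Nat.pos_of_ne_zero hr0)
    have hsplit : q / r = (d / r) * (q / d) := div_mul_div_of_dvd hrd hd hr0 hd0.ne'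
    have hgcd : Nat.gcd ((r * u) * ((d / r) * v)) q = d := by
      rw [show (r * u) * ((d / r) * v) = r * (u * ((d / r) * v)) by ring,
        gcd_mul_eq_of_dvd _ hrq, Nat.Coprime.gcd_mul_left_cancel _ hu1, hsplit,
        Nat.gcd_mul_left, hv1, mul_one, Nat.mul_div_cancel' hrd]
    simp only [hi_def]
    rw [if_pos hgcd, if_pos ⟨hu1, hv1⟩, natCast_mul_cpow, natCast_mul_cpow, mul_inv, mul_inv]
    ring

lemma tsum_pair_split (s : ℂ) (hs : 1 < s.re) (P Q : ℕ → Prop) [DecidablePred P]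
    [DecidablePred Q] (c : ℂ) :
    (∑' p : ℕ × ℕ, if P p.1 ∧ Q p.2 then c * (((p.1 : ℂ) ^ s)⁻¹ * ((p.2 : ℂ) ^ s)⁻¹) else 0)
      = c * ((∑' u : ℕ, if P u then ((u : ℂ) ^ s)⁻¹ else 0) *
          (∑' v : ℕ, if Q v then ((v : ℂ) ^ s)⁻¹ else 0)) := by
  have h1 := summable_norm_ite_cpow s hs P
  have h2 := summable_norm_ite_cpow s hs Q
  have key := tsum_mul_tsum_of_summable_norm h1 h2
  rw [key, ← tsum_mul_left]
  refine tsum_congr fun p => ?_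
  by_cases hP : P p.1 <;> by_cases hQ : Q p.2 <;> simp [hP, hQ, mul_assoc]

lemma summable_norm_base (s : ℂ) (hs : 1 < s.re) :
    Summable (fun n : ℕ => ‖((n : ℂ) ^ s)⁻¹‖) := by
  have := summable_norm_ite_cpow s hs (fun _ => True)
  simpa using this

set_option maxHeartbeats 1000000 in
lemma summable_norm_prod (s : ℂ) (hs : 1 < s.re) :
    Summable (fun p : ℕ × ℕ => ‖((p.1 : ℂ) ^ s)⁻¹‖ * ‖((p.2 : ℂ) ^ s)⁻¹‖) := by
  exact Summable.mul_of_nonneg (summable_norm_base s hs) (summable_norm_base s hs)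
    (fun _ => norm_nonneg _) (fun _ => norm_nonneg _)

lemma summable_pair_ite (s : ℂ) (hs : 1 < s.re) (P : ℕ × ℕ → Prop) [DecidablePred P] :
    Summable (fun p : ℕ × ℕ => if P p then ((p.1 : ℂ) ^ s)⁻¹ * ((p.2 : ℂ) ^ s)⁻¹ else 0) := by
  refine Summable.of_norm (((summable_norm_prod s hs)).of_nonneg_of_le
    (fun _ => norm_nonneg _) fun p => ?_)
  by_cases h : P p
  · simp [h, norm_mul]
  · simp only [if_neg h, norm_zero]
    positivity

lemma summable_g_sigma (s : ℂ) (hs : 1 < s.re) (q d : ℕ) :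
    Summable (fun x : (Σ _ : {r // r ∈ d.divisors}, ℕ × ℕ) =>
      if Nat.gcd x.2.1 (q / (x.1 : ℕ)) = 1 ∧ Nat.gcd x.2.2 (q / d) = 1 then
        (((x.1 : ℕ) : ℂ) ^ s)⁻¹ * ((x.2.1 : ℂ) ^ s)⁻¹ *
          (((d / (x.1 : ℕ) : ℕ) : ℂ) ^ s)⁻¹ * ((x.2.2 : ℂ) ^ s)⁻¹
      else 0) := by
  refine Summable.of_norm ((summable_sigma_of_nonneg (fun _ => norm_nonneg _)).mpr ⟨?_, ?_⟩)
  · rintro ⟨r, hr⟩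
    set C : ℝ := ‖(((r : ℕ) : ℂ) ^ s)⁻¹‖ * ‖(((d / r : ℕ) : ℂ) ^ s)⁻¹‖ with hC
    refine ((summable_norm_prod s hs).mul_left C).of_nonneg_of_le
      (fun _ => norm_nonneg _) fun p => ?_
    dsimp only
    by_cases h : Nat.gcd p.1 (q / r) = 1 ∧ Nat.gcd p.2 (q / d) = 1
    · rw [if_pos h, norm_mul, norm_mul, norm_mul, hC]
      exact le_of_eq (by ring)
    · rw [if_neg h, norm_zero, hC]
      positivity
  · exact Summable.of_finite

lemma rhs_eval (s : ℂ) (q d : ℕ) (hq : 0 < q) (hd0 : 0 < d) (hd : d ∣ q) :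
    (∑' r : ℕ, ∑' h : ℕ, ∑' H : ℕ,
        (if r * h ∣ q ∧ r ∣ d ∧ H ∣ q / d then
          ((ArithmeticFunction.moebius h : ℤ) : ℂ) * ((ArithmeticFunction.moebius H : ℤ) : ℂ)
            / ((h * H : ℕ) : ℂ) ^ s
        else 0))
      = ∑ r ∈ d.divisors,
          (∑ h ∈ (q / r).divisors, ((ArithmeticFunction.moebius h : ℤ) : ℂ) / (h : ℂ) ^ s) *
            (∑ H ∈ (q / d).divisors, ((ArithmeticFunction.moebius H : ℤ) : ℂ) / (H : ℂ) ^ s) := by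
  classical
  have hqd0 : q / d ≠ 0 := (Nat.div_pos (Nat.le_of_dvd hq hd) hd0).ne'
  rw [tsum_eq_sum (s := d.divisors) ?h1]
  case h1 =>
    intro r hr
    have hnd : ¬ r ∣ d := fun hdvd => hr (Nat.mem_divisors.mpr ⟨hdvd, hd0.ne'⟩)
    simp [hnd]
  refine Finset.sum_congr rfl fun r hr => ?_
  obtain ⟨hrd, -⟩ := Nat.mem_divisors.mp hr
  have hr0 : 0 < r := Nat.pos_of_ne_zero fun h0 => hd0.ne' (Nat.eq_zero_of_zero_dvd (h0 ▸ hrd))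
  have hrq : r ∣ q := hrd.trans hd
  have hqr0 : q / r ≠ 0 := (Nat.div_pos (Nat.le_of_dvd hq hrq) hr0).ne'
  rw [tsum_eq_sum (s := (q / r).divisors) ?h2]
  case h2 =>
    intro h hh
    have hnd : ¬ (r * h ∣ q) := fun hdvd =>
      hh (Nat.mem_divisors.mpr ⟨(Nat.dvd_div_iff_mul_dvd hrq).mpr hdvd, hqr0⟩)
    simp [hnd]
  rw [Finset.sum_mul_sum]
  refine Finset.sum_congr rfl fun h hh => ?_
  obtain ⟨hhq, -⟩ := Nat.mem_divisors.mp hh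
  have hrhq : r * h ∣ q := (Nat.dvd_div_iff_mul_dvd hrq).mp hhq
  rw [tsum_eq_sum (s := (q / d).divisors) ?h3]
  case h3 =>
    intro H hH
    have hnd : ¬ H ∣ q / d := fun hdvd => hH (Nat.mem_divisors.mpr ⟨hdvd, hqd0⟩)
    simp [hnd]
  refine Finset.sum_congr rfl fun H hH => ?_
  obtain ⟨hHd, -⟩ := Nat.mem_divisors.mp hH
  rw [if_pos ⟨hrhq, hrd, hHd⟩, natCast_mul_cpow, div_mul_div_comm]


lemma coeff_eq (s : ℂ) (hs0 : s ≠ 0) (q d n : ℕ) :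
    (if Nat.gcd n q = d then (dk 2 n : ℂ) / (n : ℂ) ^ s else 0)
      = ∑ p ∈ n.divisorsAntidiagonal,
          (if Nat.gcd (p.1 * p.2) q = d then ((p.1 : ℂ) ^ s)⁻¹ * ((p.2 : ℂ) ^ s)⁻¹ else 0) := by
  classical
  rcases Nat.eq_zero_or_pos n with rfl | hn
  · simp [dk]
  · have hcardN : dk 2 n = n.divisorsAntidiagonal.card := by
      rw [dk, sq, ArithmeticFunction.mul_apply, Finset.card_eq_sum_ones]
      refine Finset.sum_congr rfl fun p hp => ?_
      obtain ⟨h1, h2⟩ := Nat.ne_zero_of_mem_divisorsAntidiagonal hp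
      simp [ArithmeticFunction.zeta_apply, h1, h2]
    have hsum : ∀ p ∈ n.divisorsAntidiagonal,
        (if Nat.gcd (p.1 * p.2) q = d then ((p.1 : ℂ) ^ s)⁻¹ * ((p.2 : ℂ) ^ s)⁻¹ else 0)
          = (if Nat.gcd n q = d then ((n : ℂ) ^ s)⁻¹ else 0) := by
      intro p hp
      obtain ⟨hpn, -⟩ := Nat.mem_divisorsAntidiagonal.mp hp
      rw [← hpn, natCast_mul_cpow, mul_inv]
    rw [Finset.sum_congr rfl hsum, Finset.sum_const]
    by_cases hc : Nat.gcd n q = d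
    · rw [if_pos hc, if_pos hc, hcardN, nsmul_eq_mul, div_eq_mul_inv]
    · simp [hc]

theorem stmt1 (s : ℂ) (hs : 1 < s.re) (q d : ℕ) (hq : 0 < q) (hd0 : 0 < d) (hd : d ∣ q) :
    (∑' n : ℕ, if Nat.gcd n q = d then (dk 2 n : ℂ) / (n : ℂ) ^ s else 0)
      = riemannZeta s ^ 2 / (d : ℂ) ^ s *
        ∑' r : ℕ, ∑' h : ℕ, ∑' H : ℕ,
          (if r * h ∣ q ∧ r ∣ d ∧ H ∣ q / d then
            ((ArithmeticFunction.moebius h : ℤ) : ℂ) * ((ArithmeticFunction.moebius H : ℤ) : ℂ)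
              / ((h * H : ℕ) : ℂ) ^ s
          else 0) := by
  classical
  have hs0 : s ≠ 0 := fun h => by rw [h] at hs; simp at hs; linarith
  have hqd0 : q / d ≠ 0 := (Nat.div_pos (Nat.le_of_dvd hq hd) hd0).ne'
  have hG : Summable (fun p : ℕ × ℕ =>
      if Nat.gcd (p.1 * p.2) q = d then ((p.1 : ℂ) ^ s)⁻¹ * ((p.2 : ℂ) ^ s)⁻¹ else 0) :=
    summable_pair_ite s hs _
  have h0 : ∀ p : ℕ × ℕ, p.1 * p.2 = 0 →
      (if Nat.gcd (p.1 * p.2) q = d then ((p.1 : ℂ) ^ s)⁻¹ * ((p.2 : ℂ) ^ s)⁻¹ else 0) = 0 := by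
    intro p hp
    rcases Nat.mul_eq_zero.mp hp with h | h
    · have hz : ((p.1 : ℕ) : ℂ) ^ s = 0 := by rw [h, Nat.cast_zero, Complex.zero_cpow hs0]
      split_ifs <;> simp [hz]
    · have hz : ((p.2 : ℕ) : ℂ) ^ s = 0 := by rw [h, Nat.cast_zero, Complex.zero_cpow hs0]
      split_ifs <;> simp [hz]
  have step1 := (tsum_congr (fun n => coeff_eq s hs0 q d n)).trans
    (tsum_divisorsAntidiagonal hG h0)
  rw [step1, pair_tsum_eq_sigma s hs q d hq hd0 hd]
  rw [Summable.tsum_sigma (summable_g_sigma s hs q d), tsum_fintype]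
  dsimp only
  rw [Finset.sum_coe_sort d.divisors (fun r : ℕ => ∑' p : ℕ × ℕ,
      if Nat.gcd p.1 (q / r) = 1 ∧ Nat.gcd p.2 (q / d) = 1 then
        ((r : ℂ) ^ s)⁻¹ * ((p.1 : ℂ) ^ s)⁻¹ * (((d / r : ℕ) : ℂ) ^ s)⁻¹ * ((p.2 : ℂ) ^ s)⁻¹
      else 0)]
  rw [rhs_eval s q d hq hd0 hd, Finset.mul_sum]
  refine Finset.sum_congr rfl fun r hr => ?_
  obtain ⟨hrd, -⟩ := Nat.mem_divisors.mp hr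
  have hr0 : 0 < r := Nat.pos_of_ne_zero fun h0 => hd0.ne' (Nat.eq_zero_of_zero_dvd (h0 ▸ hrd))
  have hrq : r ∣ q := hrd.trans hd
  have hqr0 : q / r ≠ 0 := (Nat.div_pos (Nat.le_of_dvd hq hrq) hr0).ne'
  have hpoint : ∀ p : ℕ × ℕ,
      (if Nat.gcd p.1 (q / r) = 1 ∧ Nat.gcd p.2 (q / d) = 1 then
        ((r : ℂ) ^ s)⁻¹ * ((p.1 : ℂ) ^ s)⁻¹ * (((d / r : ℕ) : ℂ) ^ s)⁻¹ * ((p.2 : ℂ) ^ s)⁻¹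
      else 0)
      = (if Nat.gcd p.1 (q / r) = 1 ∧ Nat.gcd p.2 (q / d) = 1 then
          (((r : ℂ) ^ s)⁻¹ * (((d / r : ℕ) : ℂ) ^ s)⁻¹) *
            (((p.1 : ℂ) ^ s)⁻¹ * ((p.2 : ℂ) ^ s)⁻¹)
        else 0) := by
    intro p
    split_ifs with h
    · ring
    · rfl
  rw [tsum_congr hpoint,
    tsum_pair_split s hs (fun u => Nat.gcd u (q / r) = 1) (fun v => Nat.gcd v (q / d) = 1) _,
    coprime_tsum s hs (q / r) hqr0, coprime_tsum s hs (q / d) hqd0]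
  have hdd : ((r : ℂ) ^ s)⁻¹ * (((d / r : ℕ) : ℂ) ^ s)⁻¹ = (((d : ℕ) : ℂ) ^ s)⁻¹ := by
    rw [← mul_inv, ← natCast_mul_cpow, Nat.mul_div_cancel' hrd]
  rw [hdd, sq, div_eq_mul_inv]
  push_cast
  ring
end

section
/- For every k ≥ 1, every prime p, and all integers N ≥ k and D ≥ 1, the Dirichlet convolution of n ↦ d_k(p^D · n) with Popovici's function μ^k vanishes at p^N; that is, ∑_{ab = p^N} d_k(p^D · a) · μ^k(b) = 0. -/
open scoped BigOperators

/-- Popovici's function `μ^k`: the `k`-fold Dirichlet-convolution power of the Möbius function. -/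
def mupow (k : ℕ) : ArithmeticFunction ℤ := (ArithmeticFunction.moebius) ^ k

open ArithmeticFunction Finset

lemma conv_prime_pow (f g : ArithmeticFunction ℤ) {p : ℕ} (hp : p.Prime) (n : ℕ) :
    (f * g) (p ^ n) = ∑ i ∈ range (n + 1), f (p ^ i) * g (p ^ (n - i)) := by
  rw [mul_apply, Nat.sum_divisorsAntidiagonal (f := fun a b => f a * g b),
    Nat.sum_divisors_prime_pow hp]
  refine Finset.sum_congr rfl fun i hi => ?_
  rw [mem_range] at hi
  rw [Nat.pow_div (by omega) hp.pos]

lemma mupow_prime_pow_eq_zero (k : ℕ) {p : ℕ} (hp : p.Prime) {j : ℕ} (hj : k < j) :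
    mupow k (p ^ j) = 0 := by
  induction k generalizing j with
  | zero =>
    simp only [mupow, pow_zero]
    rw [ArithmeticFunction.one_apply, if_neg]
    exact (Nat.one_lt_pow (by omega) hp.one_lt).ne'
  | succ k ih =>
    have hsp : mupow (k + 1) = ArithmeticFunction.moebius * mupow k := by
      simp [mupow, pow_succ, mul_comm]
    rw [hsp, conv_prime_pow _ _ hp]
    refine Finset.sum_eq_zero fun i hi => ?_
    rcases Nat.lt_or_ge i 2 with h2 | h2
    · interval_cases i
      · rw [ih (by omega)]; ring
      · rw [ih (by omega)]; ring
    · rw [moebius_apply_prime_pow hp (by omega), if_neg (by omega)]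
      ring

lemma dk_mul_mupow (k : ℕ) :
    ((dk k : ArithmeticFunction ℤ)) * mupow k = 1 := by
  have : (dk k : ArithmeticFunction ℤ) = (ArithmeticFunction.zeta : ArithmeticFunction ℤ) ^ k := by
    unfold dk
    induction k with
    | zero => simp
    | succ k ih => rw [pow_succ, pow_succ, natCoe_mul, ih]
  rw [this, mupow, ← mul_pow, coe_zeta_mul_moebius, one_pow]

theorem stmt3 (k : ℕ) (hk : 1 ≤ k) (p : ℕ) (hp : p.Prime) (N D : ℕ) (hN : k ≤ N)
    (hD : 1 ≤ D) :
    ∑ x ∈ (p ^ N).divisorsAntidiagonal, (dk k (p ^ D * x.1) : ℤ) * mupow k x.2 = 0 := by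
  have hS : ∑ x ∈ (p ^ N).divisorsAntidiagonal, (dk k (p ^ D * x.1) : ℤ) * mupow k x.2
      = ∑ i ∈ range (N + 1), ((dk k (p ^ (D + i)) : ℤ)) * mupow k (p ^ (N - i)) := by
    rw [Nat.sum_divisorsAntidiagonal (f := fun a b => (dk k (p ^ D * a) : ℤ) * mupow k b),
      Nat.sum_divisors_prime_pow hp]
    refine Finset.sum_congr rfl fun i hi => ?_
    rw [mem_range] at hi
    rw [Nat.pow_div (by omega) hp.pos, ← pow_add]
  have hT : (0 : ℤ) = ∑ i ∈ range (N + D + 1),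
      ((dk k (p ^ i) : ℤ)) * mupow k (p ^ (N + D - i)) := by
    have h1 : ((1 : ArithmeticFunction ℤ)) (p ^ (N + D)) = 0 := by
      rw [ArithmeticFunction.one_apply, if_neg]
      exact (Nat.one_lt_pow (by omega) hp.one_lt).ne'
    rw [← dk_mul_mupow k, conv_prime_pow _ _ hp] at h1
    rw [← h1]
    refine Finset.sum_congr rfl fun i hi => ?_
    simp [intCoe_apply, natCoe_apply]
  rw [hS]
  -- split the big sum
  have hsplit : ∑ i ∈ range (N + D + 1), ((dk k (p ^ i) : ℤ)) * mupow k (p ^ (N + D - i))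
      = (∑ i ∈ range D, ((dk k (p ^ i) : ℤ)) * mupow k (p ^ (N + D - i)))
        + ∑ i ∈ range (N + 1), ((dk k (p ^ (D + i)) : ℤ)) * mupow k (p ^ (N - i)) := by
    rw [range_eq_Ico, ← Finset.sum_Ico_consecutive _ (Nat.zero_le D) (by omega), ← range_eq_Ico,
      Finset.sum_Ico_eq_sum_range]
    congr 1
    refine Finset.sum_congr (by congr 1; omega) fun i hi => ?_
    have h2 : N + D - (D + i) = N - i := by omega
    rw [h2]
  have hzero : ∑ i ∈ range D, ((dk k (p ^ i) : ℤ)) * mupow k (p ^ (N + D - i)) = 0 := by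
    refine Finset.sum_eq_zero fun i hi => ?_
    rw [mem_range] at hi
    rw [mupow_prime_pow_eq_zero k hp (by omega)]
    ring
  have := hT
  rw [hsplit, hzero, zero_add] at this
  omega
end

section
/- The function F_δ = (n ↦ d_k(δn)) ⋆ μ^k is 'multiplicative in δ and n jointly': if D_1,…,D_r and N_1,…,N_r are prime powers of distinct primes p_1,…,p_r (allowing exponent 0), then F_{D_1⋯D_r}(N_1⋯N_r) = F_{D_1}(N_1)⋯F_{D_r}(N_r). -/
open scoped BigOperators
open Finset

/-- `F_δ = (n ↦ d_k(δn)) ⋆ μ^k`. -/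
def Fdelta (k δ : ℕ) (n : ℕ) : ℤ :=
  ∑ x ∈ n.divisorsAntidiagonal, (dk k (δ * x.1) : ℤ) * mupow k x.2

lemma isMult_pow {R : Type*} [CommSemiring R] {f : ArithmeticFunction R}
    (hf : f.IsMultiplicative) (k : ℕ) : (f ^ k).IsMultiplicative := by
  induction k with
  | zero => simpa using ArithmeticFunction.isMultiplicative_one
  | succ k ih => rw [pow_succ]; exact ih.mul hf

lemma sum_antidiag_coprime (F f₁ f₂ g : ℕ → ℤ) {m n : ℕ}
    (cop : Nat.Coprime m n)
    (hF : ∀ a₁ a₂, a₁ ∣ m → a₂ ∣ n → F (a₁ * a₂) = f₁ a₁ * f₂ a₂)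
    (hg : ∀ b₁ b₂, b₁ ∣ m → b₂ ∣ n → g (b₁ * b₂) = g b₁ * g b₂) :
    ∑ x ∈ (m * n).divisorsAntidiagonal, F x.1 * g x.2
      = (∑ x ∈ m.divisorsAntidiagonal, f₁ x.1 * g x.2) *
        (∑ x ∈ n.divisorsAntidiagonal, f₂ x.1 * g x.2) := by
  rw [sum_mul_sum, ← sum_product']
  symm
  apply sum_nbij fun ((i, j), k, l) ↦ (i * k, j * l)
  · rintro ⟨⟨a1, a2⟩, ⟨b1, b2⟩⟩ h
    simp only [Nat.mem_divisorsAntidiagonal, Ne, mem_product] at h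
    rcases h with ⟨⟨rfl, ha⟩, ⟨rfl, hb⟩⟩
    simp only [Nat.mem_divisorsAntidiagonal, Nat.mul_eq_zero, Ne]
    constructor
    · ring
    rw [Nat.mul_eq_zero] at *
    apply not_or_intro ha hb
  · simp only [Set.InjOn, mem_coe, Nat.mem_divisorsAntidiagonal, Ne, mem_product, Prod.mk.injEq]
    rintro ⟨⟨a1, a2⟩, ⟨b1, b2⟩⟩ ⟨⟨rfl, ha⟩, ⟨rfl, hb⟩⟩ ⟨⟨c1, c2⟩, ⟨d1, d2⟩⟩ hcd h
    simp only [Prod.mk.injEq] at h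
    ext <;> dsimp only
    · trans Nat.gcd (a1 * a2) (a1 * b1)
      · rw [Nat.gcd_mul_left, cop.coprime_mul_left.coprime_mul_right_right.gcd_eq_one, mul_one]
      · rw [← hcd.1.1, ← hcd.2.1] at cop
        rw [← hcd.1.1, h.1, Nat.gcd_mul_left,
          cop.coprime_mul_left.coprime_mul_right_right.gcd_eq_one, mul_one]
    · trans Nat.gcd (a1 * a2) (a2 * b2)
      · rw [mul_comm, Nat.gcd_mul_left, cop.coprime_mul_right.coprime_mul_left_right.gcd_eq_one,
          mul_one]
      · rw [← hcd.1.1, ← hcd.2.1] at cop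
        rw [← hcd.1.1, h.2, mul_comm, Nat.gcd_mul_left,
          cop.coprime_mul_right.coprime_mul_left_right.gcd_eq_one, mul_one]
    · trans Nat.gcd (b1 * b2) (a1 * b1)
      · rw [mul_comm, Nat.gcd_mul_right,
          cop.coprime_mul_right.coprime_mul_left_right.symm.gcd_eq_one, one_mul]
      · rw [← hcd.1.1, ← hcd.2.1] at cop
        rw [← hcd.2.1, h.1, mul_comm c1 d1, Nat.gcd_mul_left,
          cop.coprime_mul_right.coprime_mul_left_right.symm.gcd_eq_one, mul_one]
    · trans Nat.gcd (b1 * b2) (a2 * b2)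
      · rw [Nat.gcd_mul_right, cop.coprime_mul_left.coprime_mul_right_right.symm.gcd_eq_one,
          one_mul]
      · rw [← hcd.1.1, ← hcd.2.1] at cop
        rw [← hcd.2.1, h.2, Nat.gcd_mul_right,
          cop.coprime_mul_left.coprime_mul_right_right.symm.gcd_eq_one, one_mul]
  · simp only [Set.SurjOn, Set.subset_def, mem_coe, Nat.mem_divisorsAntidiagonal, Ne, mem_product,
      Set.mem_image, exists_prop, Prod.mk.injEq]
    rintro ⟨b1, b2⟩ h
    dsimp at h
    use ((b1.gcd m, b2.gcd m), (b1.gcd n, b2.gcd n))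
    rw [← cop.gcd_mul _, ← cop.gcd_mul _, ← h.1, Nat.gcd_mul_gcd_of_coprime_of_mul_eq_mul cop h.1,
      Nat.gcd_mul_gcd_of_coprime_of_mul_eq_mul cop.symm _]
    · rw [Nat.mul_eq_zero, not_or] at h
      simp [h.2.1, h.2.2]
    rw [mul_comm n m, h.1]
  · simp only [Nat.mem_divisorsAntidiagonal, Ne, mem_product]
    rintro ⟨⟨a1, a2⟩, ⟨b1, b2⟩⟩ ⟨⟨rfl, ha⟩, ⟨rfl, hb⟩⟩
    dsimp only
    rw [hF a1 b1 (Dvd.intro a2 rfl) (Dvd.intro b2 rfl),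
      hg a2 b2 (Dvd.intro_left a1 rfl) (Dvd.intro_left b1 rfl)]
    ring

lemma Fdelta_mul (k δ₁ n₁ δ₂ n₂ : ℕ) (h : Nat.Coprime (δ₁ * n₁) (δ₂ * n₂)) :
    Fdelta k (δ₁ * δ₂) (n₁ * n₂) = Fdelta k δ₁ n₁ * Fdelta k δ₂ n₂ := by
  have hdk : (dk k).IsMultiplicative := by
    unfold dk; exact isMult_pow ArithmeticFunction.isMultiplicative_zeta k
  have hmu : (mupow k).IsMultiplicative := by
    unfold mupow; exact isMult_pow ArithmeticFunction.isMultiplicative_moebius k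
  unfold Fdelta
  apply sum_antidiag_coprime (fun a => ((dk k (δ₁ * δ₂ * a) : ℕ) : ℤ))
    (fun a => ((dk k (δ₁ * a) : ℕ) : ℤ)) (fun a => ((dk k (δ₂ * a) : ℕ) : ℤ)) (fun b => mupow k b)
  · exact h.coprime_mul_left.coprime_mul_left_right
  · intro a₁ a₂ ha₁ ha₂
    have hc : Nat.Coprime (δ₁ * a₁) (δ₂ * a₂) :=
      Nat.Coprime.coprime_dvd_left (mul_dvd_mul_left δ₁ ha₁)
        (Nat.Coprime.coprime_dvd_right (mul_dvd_mul_left δ₂ ha₂) h)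
    have : δ₁ * δ₂ * (a₁ * a₂) = (δ₁ * a₁) * (δ₂ * a₂) := by ring
    rw [this, hdk.map_mul_of_coprime hc]
    push_cast
    ring
  · intro b₁ b₂ hb₁ hb₂
    exact hmu.map_mul_of_coprime
      (Nat.Coprime.coprime_dvd_left hb₁
        (Nat.Coprime.coprime_dvd_right hb₂ h.coprime_mul_left.coprime_mul_left_right))

theorem stmt6 (k r : ℕ) (p : Fin r → ℕ) (hp : ∀ i, (p i).Prime)
    (hinj : Function.Injective p) (d n : Fin r → ℕ) :
    Fdelta k (∏ i, p i ^ d i) (∏ i, p i ^ n i)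
      = ∏ i, Fdelta k (p i ^ d i) (p i ^ n i) := by
  have key : ∀ s : Finset (Fin r),
      Fdelta k (∏ i ∈ s, p i ^ d i) (∏ i ∈ s, p i ^ n i)
        = ∏ i ∈ s, Fdelta k (p i ^ d i) (p i ^ n i) := by
    intro s
    induction s using Finset.induction_on with
    | empty =>
      have h1 : (ArithmeticFunction.zeta ^ k) 1 = 1 :=
        (isMult_pow ArithmeticFunction.isMultiplicative_zeta k).map_one
      have h2 : (ArithmeticFunction.moebius ^ k) 1 = 1 :=
        (isMult_pow ArithmeticFunction.isMultiplicative_moebius k).map_one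
      simp [Fdelta, dk, mupow, h1, h2]
    | @insert a s ha ih =>
      rw [Finset.prod_insert ha, Finset.prod_insert ha, Finset.prod_insert ha, ← ih,
        Fdelta_mul]
      rw [← Finset.prod_mul_distrib, ← pow_add]
      apply Nat.Coprime.prod_right
      intro i hi
      rw [← pow_add]
      exact Nat.Coprime.pow _ _
        ((Nat.coprime_primes (hp a) (hp i)).mpr (fun he => ha (hinj he ▸ hi)))
  simpa using key Finset.univ
end

section
/- For Re(s) > 1, the Dirichlet series of d_k(n)² satisfies ∑_{n≥1} d_k(n)²/n^s = ζ(s)^{k²} · f(s), where f is holomorphic and bounded on any half-plane Re(s) ≥ 1/2 + ε. -/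
set_option maxHeartbeats 1000000

open scoped BigOperators

open ArithmeticFunction

namespace Aux7

lemma divisorsAntidiagonal_prime {p : ℕ} (hp : p.Prime) :
    Nat.divisorsAntidiagonal p = {(1, p), (p, 1)} := by
  ext x
  simp only [Nat.mem_divisorsAntidiagonal, Finset.mem_insert, Finset.mem_singleton]
  constructor
  · rintro ⟨hmul, hne⟩
    rcases hp.eq_one_or_self_of_dvd x.1 ⟨x.2, hmul.symm⟩ with h1 | h1
    · left
      have : x.2 = p := by rw [h1, one_mul] at hmul; exact hmul
      exact Prod.ext h1 this
    · right
      have : x.1 * x.2 = x.1 * 1 := by rw [h1] at hmul ⊢; simpa using hmul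
      exact Prod.ext h1 (by
        have := Nat.eq_of_mul_eq_mul_left (by rw [h1]; exact hp.pos) this
        simpa using this)
  · rintro (h | h) <;> simp [h, hp.ne_zero, mul_comm]

lemma mul_apply_prime {R : Type*} [CommSemiring R] (f g : ArithmeticFunction R) {p : ℕ}
    (hp : p.Prime) : (f * g) p = f 1 * g p + f p * g 1 := by
  rw [ArithmeticFunction.mul_apply, divisorsAntidiagonal_prime hp]
  rw [Finset.sum_insert (by simp [hp.ne_one, Ne.symm hp.ne_one]), Finset.sum_singleton]

lemma isMult_pow {R : Type*} [CommSemiring R] {f : ArithmeticFunction R}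
    (hf : f.IsMultiplicative) (m : ℕ) : (f ^ m).IsMultiplicative := by
  induction m with
  | zero => simpa using ArithmeticFunction.isMultiplicative_one
  | succ m ih => rw [pow_succ]; exact ih.mul hf

lemma dk_one_apply (k : ℕ) : dk k 1 = 1 :=
  (isMult_pow ArithmeticFunction.isMultiplicative_zeta k).map_one

lemma dk_prime {p : ℕ} (hp : p.Prime) (k : ℕ) : dk k p = k := by
  induction k with
  | zero => simp [dk, ArithmeticFunction.one_apply, hp.ne_one]
  | succ k ih =>
      have : dk (k+1) = dk k * ArithmeticFunction.zeta := by
        simp [dk, pow_succ]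
      rw [this, mul_apply_prime _ _ hp, dk_one_apply,
        ArithmeticFunction.zeta_apply_ne hp.ne_zero, ArithmeticFunction.zeta_apply_ne one_ne_zero,
        ih]
      ring

end Aux7

namespace Aux7

noncomputable def mc : ArithmeticFunction ℂ :=
  ((ArithmeticFunction.moebius : ArithmeticFunction ℤ) : ArithmeticFunction ℂ)

noncomputable def gk (k : ℕ) : ArithmeticFunction ℂ :=
  ArithmeticFunction.pmul ((dk k : ArithmeticFunction ℕ) : ArithmeticFunction ℂ)
    ((dk k : ArithmeticFunction ℕ) : ArithmeticFunction ℂ)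

noncomputable def hfun (k : ℕ) : ArithmeticFunction ℂ := gk k * mc ^ (k ^ 2)

lemma mc_mult : mc.IsMultiplicative :=
  ArithmeticFunction.isMultiplicative_moebius.intCast

lemma gk_mult (k : ℕ) : (gk k).IsMultiplicative :=
  ((isMult_pow ArithmeticFunction.isMultiplicative_zeta k).natCast).pmul
    ((isMult_pow ArithmeticFunction.isMultiplicative_zeta k).natCast)

lemma hfun_mult (k : ℕ) : (hfun k).IsMultiplicative :=
  (gk_mult k).mul (isMult_pow mc_mult (k ^ 2))

lemma mc_norm_le {n : ℕ} (hn : n ≠ 0) : ‖mc n‖ ≤ 1 := by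
  have : mc n = ((ArithmeticFunction.moebius n : ℤ) : ℂ) := by
    simp [mc, ArithmeticFunction.intCoe_apply]
  rw [this, Complex.norm_intCast]
  exact_mod_cast ArithmeticFunction.abs_moebius_le_one

lemma mc_pow_norm_le (m : ℕ) (n : ℕ) : ‖(mc ^ m) n‖ ≤ (dk m n : ℝ) := by
  induction m generalizing n with
  | zero =>
      simp only [pow_zero, dk]
      rcases eq_or_ne n 1 with rfl | hn
      · simp [ArithmeticFunction.one_apply]
      · simp [ArithmeticFunction.one_apply, hn]
  | succ m ih =>
      rw [pow_succ, ArithmeticFunction.mul_apply]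
      have hdk : (dk (m+1) n : ℝ) =
          ∑ x ∈ n.divisorsAntidiagonal, (dk m x.1 : ℝ) * (ArithmeticFunction.zeta x.2 : ℝ) := by
        have : dk (m+1) = dk m * ArithmeticFunction.zeta := by simp [dk, pow_succ]
        rw [this, ArithmeticFunction.mul_apply]
        push_cast
        rfl
      rw [hdk]
      refine (norm_sum_le _ _).trans (Finset.sum_le_sum fun x hx => ?_)
      rw [norm_mul]
      have hx2 : x.2 ≠ 0 :=
        Nat.pos_of_mem_divisors (Nat.snd_mem_divisors_of_mem_antidiagonal hx) |>.ne'
      have h2 : ‖mc x.2‖ ≤ (ArithmeticFunction.zeta x.2 : ℝ) := by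
        rw [ArithmeticFunction.zeta_apply_ne hx2]; exact_mod_cast mc_norm_le hx2
      exact mul_le_mul (ih x.1) h2 (norm_nonneg _) (Nat.cast_nonneg _)

lemma card_DA_le (n : ℕ) : (Nat.divisorsAntidiagonal n).card ≤ n.divisors.card := by
  refine Finset.card_le_card_of_injOn Prod.fst
    (fun x hx => Nat.fst_mem_divisors_of_mem_antidiagonal hx) ?_
  intro x hx y hy h
  simp only [Finset.mem_coe, Nat.mem_divisorsAntidiagonal] at hx hy
  have hx1 : x.1 ≠ 0 := by
    rintro h0; rw [h0, zero_mul] at hx; exact hx.2 hx.1.symm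
  refine Prod.ext h ?_
  have := hx.1.trans hy.1.symm
  rw [h] at this
  exact Nat.eq_of_mul_eq_mul_left (Nat.pos_of_ne_zero (h ▸ hx1)) this

lemma tau_one_le {n : ℕ} (hn : n ≠ 0) : 1 ≤ n.divisors.card :=
  Finset.card_pos.mpr ⟨1, Nat.one_mem_divisors.mpr hn⟩

lemma tau_div_le {d n : ℕ} (hn : n ≠ 0) (hd : d ∣ n) : d.divisors.card ≤ n.divisors.card :=
  Finset.card_le_card (Nat.divisors_subset_of_dvd hn hd)

lemma dk_le_tau (j : ℕ) : ∀ n : ℕ, n ≠ 0 → dk (j + 1) n ≤ n.divisors.card ^ j := by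
  induction j with
  | zero =>
      intro n hn
      simp [dk, ArithmeticFunction.zeta_apply_ne hn]
  | succ j ih =>
      intro n hn
      have : dk (j + 2) = dk (j + 1) * ArithmeticFunction.zeta := by simp [dk, pow_succ]
      rw [this, ArithmeticFunction.mul_apply]
      calc ∑ x ∈ n.divisorsAntidiagonal, dk (j+1) x.1 * ArithmeticFunction.zeta x.2
          ≤ ∑ _x ∈ n.divisorsAntidiagonal, n.divisors.card ^ j := by
            refine Finset.sum_le_sum fun x hx => ?_
            have hx1d : x.1 ∣ n := Nat.dvd_of_mem_divisors
              (Nat.fst_mem_divisors_of_mem_antidiagonal hx)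
            have hx1 : x.1 ≠ 0 :=
              (Nat.pos_of_mem_divisors (Nat.fst_mem_divisors_of_mem_antidiagonal hx)).ne'
            have hx2 : x.2 ≠ 0 :=
              (Nat.pos_of_mem_divisors (Nat.snd_mem_divisors_of_mem_antidiagonal hx)).ne'
            rw [ArithmeticFunction.zeta_apply_ne hx2, mul_one]
            exact (ih x.1 hx1).trans (Nat.pow_le_pow_left (tau_div_le hn hx1d) j)
        _ = (Nat.divisorsAntidiagonal n).card * n.divisors.card ^ j := by
            rw [Finset.sum_const, smul_eq_mul]
        _ ≤ n.divisors.card ^ (j + 1) := by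
            rw [pow_succ, mul_comm]
            exact Nat.mul_le_mul_left _ (card_DA_le n)

end Aux7

namespace Aux7

lemma gk_apply (k n : ℕ) : gk k n = (dk k n : ℂ) * (dk k n : ℂ) := by
  simp [gk, ArithmeticFunction.pmul_apply, ArithmeticFunction.natCoe_apply]

lemma hfun_norm_le (k : ℕ) (hk : 1 ≤ k) {n : ℕ} (hn : n ≠ 0) :
    ‖hfun k n‖ ≤ (n.divisors.card : ℝ) ^ (2 * k + k ^ 2) := by
  obtain ⟨K, hK⟩ : ∃ K, k = K + 1 := ⟨k - 1, by omega⟩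
  obtain ⟨M, hM⟩ : ∃ M, k ^ 2 = M + 1 := by have h1 : 1 ≤ k ^ 2 := Nat.one_le_pow _ _ hk; exact ⟨k ^ 2 - 1, by omega⟩
  have htau1 : (1 : ℝ) ≤ (n.divisors.card : ℝ) := by exact_mod_cast tau_one_le hn
  have key : ∀ x ∈ n.divisorsAntidiagonal,
      ‖gk k x.1 * (mc ^ (k ^ 2)) x.2‖ ≤ (n.divisors.card : ℝ) ^ (2 * K + M) := by
    intro x hx
    have hx1d : x.1 ∣ n := Nat.dvd_of_mem_divisors (Nat.fst_mem_divisors_of_mem_antidiagonal hx)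
    have hx2d : x.2 ∣ n := Nat.dvd_of_mem_divisors (Nat.snd_mem_divisors_of_mem_antidiagonal hx)
    have hx1 : x.1 ≠ 0 := (Nat.pos_of_mem_divisors (Nat.fst_mem_divisors_of_mem_antidiagonal hx)).ne'
    have hx2 : x.2 ≠ 0 := (Nat.pos_of_mem_divisors (Nat.snd_mem_divisors_of_mem_antidiagonal hx)).ne'
    have h1 : (dk k x.1 : ℝ) ≤ (n.divisors.card : ℝ) ^ K := by
      rw [hK]
      exact_mod_cast (dk_le_tau K x.1 hx1).trans (Nat.pow_le_pow_left (tau_div_le hn hx1d) K)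
    have h2 : ‖(mc ^ (k ^ 2)) x.2‖ ≤ (n.divisors.card : ℝ) ^ M := by
      refine (mc_pow_norm_le (k ^ 2) x.2).trans ?_
      rw [hM]
      exact_mod_cast (dk_le_tau M x.2 hx2).trans (Nat.pow_le_pow_left (tau_div_le hn hx2d) M)
    have hg : ‖gk k x.1‖ ≤ ((n.divisors.card : ℝ) ^ K) ^ 2 := by
      rw [gk_apply, norm_mul, Complex.norm_natCast, sq]
      have h0 : (0:ℝ) ≤ (dk k x.1 : ℝ) := Nat.cast_nonneg _
      exact mul_le_mul h1 h1 h0 (le_trans h0 h1)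
    calc ‖gk k x.1 * (mc ^ (k ^ 2)) x.2‖
        ≤ ((n.divisors.card : ℝ) ^ K) ^ 2 * (n.divisors.card : ℝ) ^ M := by
          rw [norm_mul]
          exact mul_le_mul hg h2 (norm_nonneg _) (by positivity)
      _ = (n.divisors.card : ℝ) ^ (2 * K + M) := by rw [← pow_mul, ← pow_add, mul_comm K 2]
  have : ‖hfun k n‖ ≤ (Nat.divisorsAntidiagonal n).card * (n.divisors.card : ℝ) ^ (2 * K + M) := by
    rw [hfun, ArithmeticFunction.mul_apply]
    refine (norm_sum_le _ _).trans ?_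
    refine (Finset.sum_le_sum key).trans ?_
    rw [Finset.sum_const, nsmul_eq_mul]
  refine this.trans ?_
  calc ((Nat.divisorsAntidiagonal n).card : ℝ) * (n.divisors.card : ℝ) ^ (2 * K + M)
      ≤ (n.divisors.card : ℝ) * (n.divisors.card : ℝ) ^ (2 * K + M) := by
        refine mul_le_mul_of_nonneg_right ?_ (by positivity)
        exact_mod_cast card_DA_le n
    _ = (n.divisors.card : ℝ) ^ (2 * K + M + 1) := by rw [pow_succ, mul_comm]
    _ ≤ (n.divisors.card : ℝ) ^ (2 * k + k ^ 2) :=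
        pow_le_pow_right₀ htau1 (by omega)

lemma mc_pow_one_apply (m : ℕ) : (mc ^ m) 1 = 1 := (isMult_pow mc_mult m).map_one

lemma mc_prime {p : ℕ} (hp : p.Prime) : mc p = -1 := by
  simp [mc, ArithmeticFunction.intCoe_apply, ArithmeticFunction.moebius_apply_prime hp]

lemma mc_pow_prime {p : ℕ} (hp : p.Prime) (m : ℕ) : (mc ^ m) p = -(m : ℂ) := by
  induction m with
  | zero => simp [ArithmeticFunction.one_apply, hp.ne_one]
  | succ m ih =>
      rw [pow_succ, mul_apply_prime _ _ hp, mc_pow_one_apply, mc_prime hp, ih, mc_mult.map_one]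
      push_cast; ring

lemma hfun_prime (k : ℕ) {p : ℕ} (hp : p.Prime) : hfun k p = 0 := by
  rw [hfun, mul_apply_prime _ _ hp, mc_pow_prime hp, mc_pow_one_apply, gk_apply, gk_apply,
    dk_prime hp, dk_one_apply]
  push_cast; ring

lemma hfun_eq_zero (k : ℕ) {n : ℕ} (hn : n ≠ 0) {p : ℕ} (hp : p.Prime) (hpd : p ∣ n)
    (h1 : n.factorization p = 1) : hfun k n = 0 := by
  rw [(hfun_mult k).multiplicative_factorization _ hn]
  refine Finset.prod_eq_zero (i := p) ?_ ?_
  · rw [Nat.support_factorization]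
    exact Nat.mem_primeFactors.mpr ⟨hp, hpd, hn⟩
  · show hfun k (p ^ n.factorization p) = 0
    rw [h1, pow_one]
    exact hfun_prime k hp

end Aux7

namespace Aux7

lemma tau_le_rpow {δ : ℝ} (hδ : 0 < δ) :
    ∃ C : ℝ, 1 ≤ C ∧ ∀ n : ℕ, n ≠ 0 → (n.divisors.card : ℝ) ≤ C * (n : ℝ) ^ δ := by
  set δ' := δ / 2 with hδ'def
  have hδ'0 : 0 < δ' := by positivity
  set P : ℕ := ⌈(2:ℝ) ^ (1/δ')⌉₊ + 1 with hPdef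
  have hP0 : 0 < P := Nat.succ_pos _
  set ε := δ' / P with hεdef
  have hε0 : 0 < ε := by positivity
  have hlog2 : 0 < Real.log 2 := Real.log_pos one_lt_two
  set A : ℝ := 1 / (ε * Real.log 2) + 1 with hAdef
  have hA1 : 1 ≤ A := le_add_of_nonneg_left (by positivity)
  refine ⟨A ^ P, one_le_pow₀ hA1, fun n hn => ?_⟩
  have hn1 : 1 ≤ n := Nat.one_le_iff_ne_zero.mpr hn
  have hnR : (1:ℝ) ≤ (n:ℝ) := by exact_mod_cast hn1
  have hnR0 : (0:ℝ) < (n:ℝ) := lt_of_lt_of_le one_pos hnR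
  set L := Nat.log 2 n with hLdef
  have hexp : ∀ p ∈ n.primeFactors, n.factorization p ≤ L := by
    intro p hp
    have hpp : p.Prime := Nat.prime_of_mem_primeFactors hp
    have hdvd : p ^ n.factorization p ∣ n := Nat.ordProj_dvd n p
    have h2 : 2 ^ n.factorization p ≤ n :=
      le_trans (Nat.pow_le_pow_left hpp.two_le _) (Nat.le_of_dvd (Nat.pos_of_ne_zero hn) hdvd)
    exact (Nat.le_log_iff_pow_le one_lt_two hn).mpr h2
  have hcard : (n.divisors.card : ℝ) =
      ∏ p ∈ n.primeFactors, ((n.factorization p + 1 : ℕ) : ℝ) := by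
    rw [Nat.card_divisors hn]
    push_cast
    rfl
  set small := n.primeFactors.filter (fun p => p < P) with hsmalldef
  set large := n.primeFactors.filter (fun p => ¬ p < P) with hlargedef
  -- Large primes: product bounded by n ^ δ'
  have hlargeB : (∏ p ∈ large, ((n.factorization p + 1 : ℕ) : ℝ)) ≤ (n:ℝ) ^ δ' := by
    have step1 : ∀ p ∈ large, ((n.factorization p + 1 : ℕ) : ℝ) ≤
        (((p : ℝ)) ^ (n.factorization p)) ^ δ' := by
      intro p hp
      obtain ⟨hpf, hpP⟩ := Finset.mem_filter.mp hp
      have hpp := Nat.prime_of_mem_primeFactors hpf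
      have hp0 : (0:ℝ) ≤ (p:ℝ) := Nat.cast_nonneg _
      have hpR : (2:ℝ) ^ (1/δ') ≤ (p:ℝ) := by
        have h1 : ⌈(2:ℝ) ^ (1/δ')⌉₊ ≤ p := by omega
        exact (Nat.le_ceil _).trans (by exact_mod_cast h1)
      have h2p : (2:ℝ) ≤ (p:ℝ) ^ δ' := by
        have := Real.rpow_le_rpow (by positivity) hpR (le_of_lt hδ'0)
        rwa [← Real.rpow_mul (by norm_num : (0:ℝ) ≤ 2), one_div,
          inv_mul_cancel₀ (ne_of_gt hδ'0), Real.rpow_one] at this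
      set e := n.factorization p
      have he1 : ((e + 1 : ℕ) : ℝ) ≤ (2:ℝ) ^ e := by
        exact_mod_cast Nat.lt_two_pow_self (n := e)
      have he2 : (2:ℝ) ^ e ≤ ((p:ℝ) ^ δ') ^ e :=
        pow_le_pow_left₀ (by norm_num) h2p e
      have heq : ((p:ℝ) ^ δ') ^ e = ((p : ℝ) ^ e) ^ δ' := by
        rw [← Real.rpow_mul_natCast hp0 δ' e, mul_comm, Real.rpow_natCast_mul hp0 e δ']
      exact (he1.trans he2).trans_eq heq
    calc (∏ p ∈ large, ((n.factorization p + 1 : ℕ) : ℝ))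
        ≤ ∏ p ∈ large, ((p : ℝ) ^ (n.factorization p)) ^ δ' :=
          Finset.prod_le_prod (fun _ _ => by positivity) step1
      _ ≤ ∏ p ∈ n.primeFactors, ((p : ℝ) ^ (n.factorization p)) ^ δ' := by
          rw [hlargedef, Finset.prod_filter]
          refine Finset.prod_le_prod (fun p _ => ?_) (fun p hp => ?_)
          · split <;> positivity
          · have hpp := Nat.prime_of_mem_primeFactors hp
            have h1 : (1:ℝ) ≤ (p:ℝ) ^ (n.factorization p) :=
              one_le_pow₀ (by exact_mod_cast hpp.one_lt.le)
            have h2 : (1:ℝ) ≤ ((p:ℝ) ^ n.factorization p) ^ δ' := by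
              calc (1:ℝ) = 1 ^ δ' := (Real.one_rpow δ').symm
                _ ≤ ((p:ℝ) ^ n.factorization p) ^ δ' :=
                  Real.rpow_le_rpow zero_le_one h1 (le_of_lt hδ'0)
            split <;> simp [h2]
      _ = (n:ℝ) ^ δ' := by
          rw [Real.finset_prod_rpow _ _ (fun p _ => by positivity) δ']
          congr 1
          have hnat : (∏ p ∈ n.primeFactors, p ^ n.factorization p) = n := by
            conv_rhs => rw [← Nat.factorization_prod_pow_eq_self hn]
            rw [← Nat.support_factorization]
            rfl
          calc (∏ p ∈ n.primeFactors, (p:ℝ) ^ n.factorization p)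
              = ((∏ p ∈ n.primeFactors, p ^ n.factorization p : ℕ) : ℝ) := by
                push_cast
                rfl
            _ = (n:ℝ) := by rw [hnat]
  -- Small primes: product bounded by (A * n ^ ε) ^ P
  have hLn : ((L + 1 : ℕ) : ℝ) ≤ A * (n:ℝ) ^ ε := by
    have h2L : (2:ℝ) ^ L ≤ (n:ℝ) := by exact_mod_cast Nat.pow_log_le_self 2 hn
    have h1 : (L:ℝ) * Real.log 2 ≤ Real.log n := by
      have := Real.log_le_log (by positivity) h2L
      rwa [Real.log_pow] at this
    have h2 : ε * Real.log n ≤ (n:ℝ) ^ ε := by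
      have := Real.log_natCast_le_rpow_div n hε0
      rw [le_div_iff₀ hε0] at this
      linarith [this]
    have h3 : (1:ℝ) ≤ (n:ℝ) ^ ε := Real.one_le_rpow hnR (le_of_lt hε0)
    have hεt : 0 < ε * Real.log 2 := by positivity
    rw [hAdef]
    rw [← mul_le_mul_iff_left₀ hεt]
    have hexpand : (1 / (ε * Real.log 2) + 1) * (n:ℝ) ^ ε * (ε * Real.log 2) =
        (n:ℝ) ^ ε + (n:ℝ) ^ ε * (ε * Real.log 2) := by
      field_simp
    rw [hexpand]
    push_cast
    have hLe : (L:ℝ) * (ε * Real.log 2) ≤ (n:ℝ) ^ ε := by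
      calc (L:ℝ) * (ε * Real.log 2) = ε * ((L:ℝ) * Real.log 2) := by ring
        _ ≤ ε * Real.log n := by
            exact mul_le_mul_of_nonneg_left h1 (le_of_lt hε0)
        _ ≤ (n:ℝ) ^ ε := h2
    nlinarith [hεt, h3]
  have hsmallB : (∏ p ∈ small, ((n.factorization p + 1 : ℕ) : ℝ)) ≤ (A * (n:ℝ) ^ ε) ^ P := by
    have hcardsmall : small.card ≤ P := by
      have : small ⊆ Finset.range P := by
        intro p hp
        exact Finset.mem_range.mpr (Finset.mem_filter.mp hp).2
      simpa using Finset.card_le_card this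
    have h1An : 1 ≤ A * (n:ℝ) ^ ε :=
      one_le_mul_of_one_le_of_one_le hA1 (Real.one_le_rpow hnR (le_of_lt hε0))
    calc (∏ p ∈ small, ((n.factorization p + 1 : ℕ) : ℝ))
        ≤ ∏ _p ∈ small, ((L + 1 : ℕ) : ℝ) := by
          refine Finset.prod_le_prod (fun _ _ => by positivity) fun p hp => ?_
          have := hexp p (Finset.mem_filter.mp hp).1
          exact_mod_cast Nat.succ_le_succ this
      _ = ((L + 1 : ℕ) : ℝ) ^ small.card := Finset.prod_const _
      _ ≤ (A * (n:ℝ) ^ ε) ^ small.card :=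
          pow_le_pow_left₀ (by positivity) hLn _
      _ ≤ (A * (n:ℝ) ^ ε) ^ P := pow_le_pow_right₀ h1An hcardsmall
  have hεP : (ε * P : ℝ) = δ' := by
    rw [hεdef]
    field_simp
  calc (n.divisors.card : ℝ)
      = (∏ p ∈ small, ((n.factorization p + 1 : ℕ) : ℝ)) *
        (∏ p ∈ large, ((n.factorization p + 1 : ℕ) : ℝ)) := by
        rw [hcard, ← Finset.prod_filter_mul_prod_filter_not n.primeFactors (fun p => p < P)]
    _ ≤ (A * (n:ℝ) ^ ε) ^ P * (n:ℝ) ^ δ' := by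
        refine mul_le_mul hsmallB hlargeB (Finset.prod_nonneg fun _ _ => by positivity) ?_
        positivity
    _ = A ^ P * ((n:ℝ) ^ δ' * (n:ℝ) ^ δ') := by
        rw [mul_pow, ← Real.rpow_mul_natCast (le_of_lt hnR0) ε P, hεP, mul_assoc]
    _ = A ^ P * (n:ℝ) ^ δ := by
        rw [← Real.rpow_add hnR0]
        congr 1
        rw [hδ'def]; ring

end Aux7

namespace Aux7

def SF : Set ℕ := {n | n ≠ 0 ∧ ∀ p : ℕ, p.Prime → p ∣ n → 2 ≤ n.factorization p}

noncomputable def afun (n : ℕ) : ℕ :=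
  n.primeFactors.prod fun p => p ^ ((n.factorization p - 3 * (n.factorization p % 2)) / 2)

noncomputable def bfun (n : ℕ) : ℕ :=
  n.primeFactors.prod fun p => p ^ (n.factorization p % 2)

lemma afun_pos {n : ℕ} : 0 < afun n :=
  Finset.prod_pos fun p hp => pow_pos (Nat.prime_of_mem_primeFactors hp).pos _

lemma bfun_pos {n : ℕ} : 0 < bfun n :=
  Finset.prod_pos fun p hp => pow_pos (Nat.prime_of_mem_primeFactors hp).pos _

lemma ab_eq {n : ℕ} (hn : n ∈ SF) : afun n ^ 2 * bfun n ^ 3 = n := by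
  obtain ⟨hn0, hsq⟩ := hn
  rw [afun, bfun, ← Finset.prod_pow, ← Finset.prod_pow, ← Finset.prod_mul_distrib]
  have hnat : (∏ p ∈ n.primeFactors, p ^ n.factorization p) = n := by
    conv_rhs => rw [← Nat.factorization_prod_pow_eq_self hn0]
    rw [← Nat.support_factorization]
    rfl
  conv_rhs => rw [← hnat]
  refine Finset.prod_congr rfl fun p hp => ?_
  have h2 : 2 ≤ n.factorization p :=
    hsq p (Nat.prime_of_mem_primeFactors hp) (Nat.dvd_of_mem_primeFactors hp)
  rw [← pow_mul, ← pow_mul, ← pow_add]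
  congr 1
  omega

lemma hfun_summable (k : ℕ) (hk : 1 ≤ k) {s : ℂ} (hs : 1/2 < s.re) :
    LSeriesSummable (fun n => hfun k n) s := by
  refine Summable.of_norm ?_
  set sre := s.re with hsredef
  set Mk : ℕ := 2 * k + k ^ 2 with hMkdef
  have hsrehalf : (0:ℝ) < sre - 1/2 := by linarith
  set δ : ℝ := (sre - 1/2) / (2 * (Mk + 1)) with hδdef
  have hδ0 : 0 < δ := by positivity
  obtain ⟨C, hC1, hC⟩ := tau_le_rpow hδ0
  set θ : ℝ := (sre + 1/2) / 2 with hθdef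
  have hθhalf : 1/2 < θ := by rw [hθdef]; linarith
  have hδMk : δ * Mk ≤ sre - θ := by
    rw [hδdef, hθdef]
    rw [div_mul_eq_mul_div, div_le_iff₀ (by positivity)]
    have hMk0 : (0:ℝ) ≤ (Mk:ℝ) := Nat.cast_nonneg _
    nlinarith
  -- pointwise bound on SF
  have key : ∀ n : ℕ, n ∈ SF → ‖LSeries.term (fun n => hfun k n) s n‖ ≤
      C ^ Mk * (n:ℝ) ^ (-θ) := by
    intro n hnSF
    obtain ⟨hn0, _⟩ := hnSF
    have hn1 : (1:ℝ) ≤ (n:ℝ) := by exact_mod_cast Nat.one_le_iff_ne_zero.mpr hn0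
    have hn0R : (0:ℝ) < (n:ℝ) := lt_of_lt_of_le one_pos hn1
    rw [LSeries.norm_term_eq, if_neg hn0]
    have h1 : ‖hfun k n‖ ≤ (n.divisors.card : ℝ) ^ Mk := hfun_norm_le k hk hn0
    have h2 : (n.divisors.card : ℝ) ^ Mk ≤ (C * (n:ℝ) ^ δ) ^ Mk :=
      pow_le_pow_left₀ (Nat.cast_nonneg _) (hC n hn0) Mk
    have h3 : (C * (n:ℝ) ^ δ) ^ Mk = C ^ Mk * (n:ℝ) ^ (δ * Mk) := by
      rw [mul_pow, Real.rpow_mul_natCast (le_of_lt hn0R)]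
    rw [div_le_iff₀ (Real.rpow_pos_of_pos hn0R _)]
    calc ‖hfun k n‖ ≤ C ^ Mk * (n:ℝ) ^ (δ * Mk) := by
          rw [← h3]; exact h1.trans h2
      _ ≤ C ^ Mk * ((n:ℝ) ^ (-θ) * (n:ℝ) ^ sre) := by
          rw [← Real.rpow_add hn0R]
          refine mul_le_mul_of_nonneg_left ?_ (by positivity)
          exact Real.rpow_le_rpow_of_exponent_le hn1 (by linarith)
      _ = C ^ Mk * (n:ℝ) ^ (-θ) * (n:ℝ) ^ sre := by ring
  refine (summable_subtype_and_compl (s := SF)).mp ⟨?_, ?_⟩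
  · -- summable on SF
    have h2θ : (-(2*θ) : ℝ) < -1 := by linarith
    have h3θ : (-(3*θ) : ℝ) < -1 := by linarith
    have hF : Summable (fun x : ℕ × ℕ => ((x.1:ℝ) ^ (-(2*θ)) * (x.2:ℝ) ^ (-(3*θ)))) :=
      Summable.mul_of_nonneg (Real.summable_nat_rpow.mpr h2θ) (Real.summable_nat_rpow.mpr h3θ)
        (fun _ => Real.rpow_nonneg (Nat.cast_nonneg _) _)
        (fun _ => Real.rpow_nonneg (Nat.cast_nonneg _) _)
    have hinj : Function.Injective (fun n : SF => ((afun n, bfun n) : ℕ × ℕ)) := by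
      intro a b hab
      simp only [Prod.mk.injEq] at hab
      have ha := ab_eq a.2
      have hb := ab_eq b.2
      refine Subtype.ext ?_
      rw [← ha, ← hb, hab.1, hab.2]
    have hFψ := hF.comp_injective hinj
    have hdom : Summable (fun n : SF =>
        C ^ Mk * (((afun n : ℕ) : ℝ) ^ (-(2*θ)) * ((bfun n : ℕ) : ℝ) ^ (-(3*θ)))) :=
      hFψ.mul_left _
    refine hdom.of_nonneg_of_le (fun _ => norm_nonneg _) (fun n => ?_)
    have ha0 : (0:ℝ) < ((afun (n:ℕ) : ℕ) : ℝ) := by exact_mod_cast afun_pos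
    have hb0 : (0:ℝ) < ((bfun (n:ℕ) : ℕ) : ℝ) := by exact_mod_cast bfun_pos
    have heq : ((n:ℕ):ℝ) ^ (-θ) =
        ((afun (n:ℕ) : ℕ) : ℝ) ^ (-(2*θ)) * ((bfun (n:ℕ) : ℕ) : ℝ) ^ (-(3*θ)) := by
      have hab := ab_eq n.2
      have hcast : ((n:ℕ):ℝ) = ((afun (n:ℕ) : ℕ):ℝ) ^ (2:ℕ) * ((bfun (n:ℕ) : ℕ):ℝ) ^ (3:ℕ) := by
        conv_lhs => rw [← hab]
        push_cast
        ring
      rw [hcast, Real.mul_rpow (by positivity) (by positivity),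
        ← Real.rpow_natCast_mul ha0.le 2 (-θ), ← Real.rpow_natCast_mul hb0.le 3 (-θ)]
      norm_num
    refine (key n n.2).trans (le_of_eq ?_)
    rw [heq]
  · -- complement: all terms vanish
    refine summable_of_ne_finset_zero (s := ∅) fun n _ => ?_
    have hn : (n : ℕ) ∉ SF := n.2
    rcases eq_or_ne (n:ℕ) 0 with h0 | h0
    · simp [LSeries.term, h0]
    · have : ∃ p : ℕ, p.Prime ∧ p ∣ (n:ℕ) ∧ (n:ℕ).factorization p = 1 := by
        by_contra hcon
        push_neg at hcon
        refine hn ⟨h0, fun p hp hpd => ?_⟩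
        have h1 : 1 ≤ (n:ℕ).factorization p := (hp.factorization_pos_of_dvd h0 hpd)
        rcases Nat.lt_or_ge ((n:ℕ).factorization p) 2 with hlt | hge
        · exact absurd (by omega : (n:ℕ).factorization p = 1) (hcon p hp hpd)
        · exact hge
      obtain ⟨p, hp, hpd, hp1⟩ := this
      have : hfun k n = 0 := hfun_eq_zero k h0 hp hpd hp1
      simp [LSeries.term, h0, this]

end Aux7

namespace Aux7

open scoped LSeries.notation

noncomputable def zc : ArithmeticFunction ℂ :=
  ((ArithmeticFunction.zeta : ArithmeticFunction ℕ) : ArithmeticFunction ℂ)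

lemma zc_summable {s : ℂ} (hs : 1 < s.re) : LSeriesSummable ↗zc s := by
  have := ArithmeticFunction.LSeriesSummable_zeta_iff.mpr hs
  refine this.congr fun n => ?_
  simp [zc, ArithmeticFunction.natCoe_apply]

lemma zc_LSeries {s : ℂ} (hs : 1 < s.re) : LSeries ↗zc s = riemannZeta s := by
  rw [← ArithmeticFunction.LSeries_zeta_eq_riemannZeta hs]
  refine LSeries_congr (fun {n} _ => ?_) s
  simp [zc, ArithmeticFunction.natCoe_apply]

lemma zc_pow_LSeries (m : ℕ) (hm : 1 ≤ m) {s : ℂ} (hs : 1 < s.re) :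
    LSeriesSummable ↗(zc ^ m) s ∧ LSeries ↗(zc ^ m) s = riemannZeta s ^ m := by
  induction m with
  | zero => omega
  | succ m ih =>
      rcases Nat.eq_or_lt_of_le hm with h1 | h1
      · simp only [← h1, pow_one]
        exact ⟨zc_summable hs, zc_LSeries hs⟩
      · have hm1 : 1 ≤ m := by omega
        obtain ⟨hsum, hval⟩ := ih hm1
        constructor
        · rw [pow_succ]
          exact ArithmeticFunction.LSeriesSummable_mul hsum (zc_summable hs)
        · rw [pow_succ, ArithmeticFunction.LSeries_mul' hsum (zc_summable hs), hval,
            zc_LSeries hs, pow_succ]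

lemma gk_eq_mul (k : ℕ) : gk k = hfun k * zc ^ (k ^ 2) := by
  rw [hfun, mul_assoc, ← mul_pow]
  have : mc * zc = 1 := ArithmeticFunction.coe_moebius_mul_coe_zeta
  rw [this, one_pow, mul_one]

end Aux7

open Aux7 in
open scoped LSeries.notation in
theorem stmt7' (k : ℕ) (hk : 1 ≤ k) :
    ∃ f : ℂ → ℂ,
      DifferentiableOn ℂ f {s : ℂ | 1 / 2 < s.re} ∧
      (∀ ε : ℝ, 0 < ε → ∃ C : ℝ, ∀ s : ℂ, 1 / 2 + ε ≤ s.re → ‖f s‖ ≤ C) ∧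
      ∀ s : ℂ, 1 < s.re →
        ∑' n : ℕ, ((dk k n : ℂ)) ^ 2 / (n : ℂ) ^ s = riemannZeta s ^ (k ^ 2) * f s := by
  classical
  refine ⟨fun s => LSeries (fun n => hfun k n) s, ?_, ?_, ?_⟩
  · -- differentiability
    have habs : LSeries.abscissaOfAbsConv (fun n => hfun k n) ≤ ((1/2 : ℝ) : EReal) := by
      refine LSeries.abscissaOfAbsConv_le_of_forall_lt_LSeriesSummable fun y hy => ?_
      exact hfun_summable k hk (by simpa using hy)
    refine (LSeries_differentiableOn (fun n => hfun k n)).mono fun s hs => ?_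
    simp only [Set.mem_setOf_eq] at hs ⊢
    refine lt_of_le_of_lt habs ?_
    exact_mod_cast hs
  · -- boundedness
    intro ε hε
    set s₀ : ℂ := ((1/2 + ε : ℝ) : ℂ) with hs₀def
    have hs₀re : s₀.re = 1/2 + ε := by simp [hs₀def]
    have hsum₀ : LSeriesSummable (fun n => hfun k n) s₀ :=
      hfun_summable k hk (by rw [hs₀re]; linarith)
    refine ⟨∑' n, ‖LSeries.term (fun n => hfun k n) s₀ n‖, fun s hs => ?_⟩
    have hre : s₀.re ≤ s.re := by rw [hs₀re]; exact hs
    have hsums : LSeriesSummable (fun n => hfun k n) s :=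
      hfun_summable k hk (by linarith [hs₀re ▸ hre] )
    calc ‖LSeries (fun n => hfun k n) s‖
        ≤ ∑' n, ‖LSeries.term (fun n => hfun k n) s n‖ := norm_tsum_le_tsum_norm hsums.norm
      _ ≤ ∑' n, ‖LSeries.term (fun n => hfun k n) s₀ n‖ :=
          Summable.tsum_le_tsum (fun n => LSeries.norm_term_le_of_re_le_re _ hre n) hsums.norm hsum₀.norm
  · -- the identity
    intro s hs
    have hm1 : 1 ≤ k ^ 2 := Nat.one_le_pow _ _ hk
    have hLHS : ∑' n : ℕ, ((dk k n : ℂ)) ^ 2 / (n : ℂ) ^ s =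
        LSeries (fun n => gk k n) s := by
      rw [LSeries]
      refine tsum_congr fun n => ?_
      rcases eq_or_ne n 0 with rfl | hn
      · simp [LSeries.term_zero, ArithmeticFunction.map_zero]
      · rw [LSeries.term_of_ne_zero hn, gk_apply, sq]
    rw [hLHS]
    have h1 : LSeries (fun n => gk k n) s = LSeries ↗(hfun k * zc ^ (k ^ 2)) s := by
      rw [← gk_eq_mul]
    obtain ⟨hzsum, hzval⟩ := zc_pow_LSeries (k ^ 2) hm1 hs
    rw [h1, ArithmeticFunction.LSeries_mul' (hfun_summable k hk (by linarith)) hzsum, hzval]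
    ring


theorem stmt7 (k : ℕ) (hk : 1 ≤ k) :
    ∃ f : ℂ → ℂ,
      DifferentiableOn ℂ f {s : ℂ | 1 / 2 < s.re} ∧
      (∀ ε : ℝ, 0 < ε → ∃ C : ℝ, ∀ s : ℂ, 1 / 2 + ε ≤ s.re → ‖f s‖ ≤ C) ∧
      ∀ s : ℂ, 1 < s.re →
        ∑' n : ℕ, ((dk k n : ℂ)) ^ 2 / (n : ℂ) ^ s = riemannZeta s ^ (k ^ 2) * f s :=
  stmt7' k hk
end
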